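/- Let N ≥ 1, let ν > 0, and let z_1 > z_2 > … > z_N > 0 be real numbers that are precisely the zeros of the Laguerre polynomial L_N^{(ν−1)}. Define y ∈ ℝ^N by y_i := √(2 z_i). Then for every c > 0 the function φ(t) := √(t + c²) · y on [0,∞) takes values in the interior of C_N^B, satisfies φ(0) = c·y, and solves the ODE of type B_N with parameter ν: φ_i'(t) = ∑_{j≠i} ( 1/(φ_i(t) − φ_j(t)) + 1/(φ_i(t) + φ_j(t)) ) + ν/φ_i(t) for all i and all t ≥ 0. -/

import Mathlib

open scoped BigOperators

noncomputable section

/-- The interior of the closed Weyl chamber of type B. -/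
def interiorB {N : ℕ} (x : Fin N → ℝ) : Prop := StrictAnti x ∧ ∀ i, 0 < x i

/-- `φ` solves the ODE of type `B_N` with parameter `ν` on `[0,∞)`. -/
def solvesB {N : ℕ} (ν : ℝ) (φ : ℝ → Fin N → ℝ) : Prop :=
  ∀ t ∈ Set.Ici (0:ℝ), ∀ i : Fin N,
    HasDerivWithinAt (fun s => φ s i)
      ((∑ j ∈ Finset.univ.erase i,
          (1 / (φ t i - φ t j) + 1 / (φ t i + φ t j))) + ν / φ t i)
      (Set.Ici 0) t

/-- The `n`-th Laguerre polynomial `L_n^{(α)}` (as a function),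
`L_n^{(α)}(x) = ∑_{k=0}^n binom(n+α, n-k)·(-x)^k/k!` where
`binom(n+α, n-k) = (∏_{m=1}^{n-k} (α+k+m))/(n-k)!`. -/
def laguerre (n : ℕ) (α : ℝ) (x : ℝ) : ℝ :=
  ∑ k ∈ Finset.range (n+1),
    ((∏ m ∈ Finset.range (n - k), (α + k + m + 1)) / (Nat.factorial (n - k))) *
      ((-x)^k / (Nat.factorial k))

open Polynomial

def lagC (n : ℕ) (ν : ℝ) (k : ℕ) : ℝ :=
  if k ≤ n then ((∏ m ∈ Finset.range (n - k), (ν + k + m)) / (Nat.factorial (n - k))) *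
      ((-1)^k / (Nat.factorial k)) else 0

def lagPoly (n : ℕ) (ν : ℝ) : Polynomial ℝ :=
  ∑ k ∈ Finset.range (n+1), Polynomial.C (lagC n ν k) * Polynomial.X ^ k

lemma lagPoly_coeff (n : ℕ) (ν : ℝ) (j : ℕ) : (lagPoly n ν).coeff j = lagC n ν j := by
  rw [lagPoly, Polynomial.finset_sum_coeff]
  simp only [Polynomial.coeff_C_mul, Polynomial.coeff_X_pow, mul_ite, mul_one, mul_zero]
  rw [Finset.sum_ite_eq (Finset.range (n+1)) j (fun k => lagC n ν k)]
  by_cases h : j ≤ n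
  · simp [Finset.mem_range, Nat.lt_succ_iff, h]
  · simp [Finset.mem_range, Nat.lt_succ_iff, h, lagC]

lemma lagPoly_eval (n : ℕ) (ν : ℝ) (x : ℝ) : (lagPoly n ν).eval x = laguerre n (ν - 1) x := by
  rw [lagPoly, laguerre, Polynomial.eval_finset_sum]
  refine Finset.sum_congr rfl fun k hk => ?_
  rw [Finset.mem_range, Nat.lt_succ_iff] at hk
  simp only [Polynomial.eval_mul, Polynomial.eval_C, Polynomial.eval_pow, Polynomial.eval_X,
    lagC, if_pos hk, neg_pow x k]
  have : ∀ m : ℕ, (ν - 1 + k + m + 1 : ℝ) = ν + k + m := by intro m; ring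
  simp only [this]
  ring

lemma lagC_rec (n : ℕ) (ν : ℝ) (j : ℕ) :
    ((j:ℝ)+1) * (ν + j) * lagC n ν (j+1) = ((j:ℝ) - n) * lagC n ν j := by
  rcases lt_trichotomy j n with h | rfl | h
  · have h1 : j + 1 ≤ n := h
    have h2 : j ≤ n := h.le
    rw [lagC, lagC, if_pos h1, if_pos h2]
    have hnj : n - j = (n - (j+1)) + 1 := by omega
    have hprod : (∏ m ∈ Finset.range (n - j), (ν + j + m))
        = (∏ m ∈ Finset.range (n - (j+1)), (ν + (j+1) + m)) * (ν + j) := by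
      rw [hnj, Finset.prod_range_succ']
      congr 1
      · refine Finset.prod_congr rfl fun m _ => ?_
        push_cast; ring
      · push_cast; ring
    have hfac : ((n - j).factorial : ℝ) = (n - (j+1)).factorial * ((n:ℝ) - j) := by
      rw [hnj, Nat.factorial_succ]
      push_cast [Nat.cast_sub h1]
      ring
    have hfac2 : ((j+1).factorial : ℝ) = ((j:ℝ)+1) * j.factorial := by
      rw [Nat.factorial_succ]; push_cast; ring
    rw [hprod, hfac, hfac2, pow_succ]
    have hne1 : ((n - (j+1)).factorial : ℝ) ≠ 0 := by positivity
    have hne2 : ((n:ℝ) - j) ≠ 0 := by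
      have : (j:ℝ) < n := by exact_mod_cast h
      linarith
    have hne3 : (j.factorial : ℝ) ≠ 0 := by positivity
    have hne4 : ((j:ℝ)+1) ≠ 0 := by positivity
    field_simp
    push_cast
    ring
  · rw [lagC, lagC, if_neg (by omega), if_pos le_rfl]
    simp
  · rw [lagC, lagC, if_neg (by omega), if_neg (by omega)]
    simp

lemma lagPoly_ode (n : ℕ) (ν : ℝ) :
    X * derivative (derivative (lagPoly n ν)) + (C ν - X) * derivative (lagPoly n ν)
      + C (n:ℝ) * lagPoly n ν = 0 := by
  ext j
  simp only [coeff_add, coeff_zero, sub_mul, coeff_sub, coeff_C_mul]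
  rcases j with _ | m
  · simp only [Polynomial.mul_coeff_zero, Polynomial.coeff_X_zero, zero_mul,
      Polynomial.coeff_derivative, lagPoly_coeff]
    have := lagC_rec n ν 0
    push_cast at this ⊢
    linarith [this]
  · rw [Polynomial.coeff_X_mul, Polynomial.coeff_X_mul]
    simp only [Polynomial.coeff_derivative, lagPoly_coeff]
    have h1 := lagC_rec n ν (m+1)
    push_cast at h1 ⊢
    nlinarith [h1]

lemma derivative_finset_prod {ι : Type*} [DecidableEq ι] (s : Finset ι) (f : ι → Polynomial ℝ) :
    derivative (∏ i ∈ s, f i) = ∑ i ∈ s, (∏ j ∈ s.erase i, f j) * derivative (f i) := by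
  induction s using Finset.induction_on with
  | empty => simp
  | insert a s' hx ih =>
    rw [Finset.prod_insert hx, derivative_mul, ih, Finset.sum_insert hx,
      Finset.erase_insert hx, Finset.mul_sum]
    congr 1
    · ring
    · refine Finset.sum_congr rfl fun b hb => ?_
      rw [Finset.erase_insert_of_ne (by rintro rfl; exact hx hb), Finset.prod_insert
        (fun h => hx (Finset.mem_of_mem_erase h))]
      ring

-- main electrostatic lemma
lemma electro (N : ℕ) (hN : 1 ≤ N) (ν : ℝ) (hν : 0 < ν)
    (z : Fin N → ℝ) (hz : StrictAnti z) (hzpos : ∀ i, 0 < z i)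
    (hzero : ∀ i, laguerre N (ν - 1) (z i) = 0) (i : Fin N) :
    2 * z i * (∑ j ∈ Finset.univ.erase i, 1 / (z i - z j)) = z i - ν := by
  classical
  have hzinj : Function.Injective z := hz.injective
  set P : Polynomial ℝ := ∏ j : Fin N, (X - Polynomial.C (z j)) with hPdef
  have hPeval : ∀ x, P.eval x = ∏ j : Fin N, (x - z j) := by
    intro x; simp [hPdef, Polynomial.eval_prod]
  -- leading coefficient k
  set k : ℝ := lagC N ν N with hk
  have hkval : k = (-1)^N / (Nat.factorial N) := by
    rw [hk, lagC, if_pos le_rfl]; simp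
  have hkne : k ≠ 0 := by
    rw [hkval]
    have : ((Nat.factorial N : ℝ)) ≠ 0 := by positivity
    intro h
    apply this
    exact absurd h (div_ne_zero (pow_ne_zero _ (by norm_num)) this)
  -- P is a product of monic linear polys
  have hPmonic : P.Monic := monic_prod_of_monic _ _ fun j _ => monic_X_sub_C (z j)
  have hPdeg : P.natDegree = N := by
    rw [hPdef]
    rw [Polynomial.natDegree_prod _ _ (fun j _ => X_sub_C_ne_zero (z j))]
    simp [Polynomial.natDegree_X_sub_C]
  -- lagPoly N ν = C k * P
  have hfact : lagPoly N ν = Polynomial.C k * P := by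
    set D : Polynomial ℝ := lagPoly N ν - Polynomial.C k * P with hD
    have hDcoeff : ∀ j, N ≤ j → D.coeff j = 0 := by
      intro j hj
      rw [hD, Polynomial.coeff_sub, Polynomial.coeff_C_mul, lagPoly_coeff]
      rcases eq_or_lt_of_le hj with h | hlt
      · rw [← h]
        have h2 : P.coeff N = 1 := by
          have := hPmonic.leadingCoeff
          rwa [Polynomial.leadingCoeff, hPdeg] at this
        rw [h2, mul_one, hk, sub_self]
      · rw [Polynomial.coeff_eq_zero_of_natDegree_lt (by rw [hPdeg]; exact hlt),
          lagC, if_neg (by omega)]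
        ring
    have hDzero : D = 0 := by
      by_contra hne
      have hdeg : D.natDegree < N := by
        by_contra hge
        push_neg at hge
        exact (Polynomial.leadingCoeff_ne_zero.mpr hne) (hDcoeff _ hge)
      have := Polynomial.eq_zero_of_natDegree_lt_card_of_eval_eq_zero D hzinj
        (fun j => by
          rw [hD, Polynomial.eval_sub, Polynomial.eval_mul, Polynomial.eval_C,
            lagPoly_eval, hzero, hPeval, Finset.prod_eq_zero (Finset.mem_univ j) (by ring)]
          ring)
        (by simpa using hdeg)
      exact hne this
    exact sub_eq_zero.mp hDzero
  -- ODE for P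
  have hodeP : X * derivative (derivative P) + (Polynomial.C ν - X) * derivative P
      + Polynomial.C (N:ℝ) * P = 0 := by
    have h2 : Polynomial.C k * (X * derivative (derivative P)
        + (Polynomial.C ν - X) * derivative P + Polynomial.C (N:ℝ) * P) = 0 := by
      have h3 := lagPoly_ode N ν
      rw [hfact] at h3
      rw [← h3, Polynomial.derivative_C_mul, Polynomial.derivative_C_mul]
      ring
    rcases mul_eq_zero.mp h2 with h | h
    · exact absurd (Polynomial.C_eq_zero.mp h) hkne
    · exact h
  have heval0 : z i * (derivative (derivative P)).eval (z i)
      + (ν - z i) * (derivative P).eval (z i) = 0 := by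
    have h4 := congrArg (Polynomial.eval (z i)) hodeP
    have hPz : P.eval (z i) = 0 := by
      rw [hPeval, Finset.prod_eq_zero (Finset.mem_univ i) (by ring)]
    simp only [Polynomial.eval_add, Polynomial.eval_mul, Polynomial.eval_sub,
      Polynomial.eval_X, Polynomial.eval_C, Polynomial.eval_zero, hPz, mul_zero, add_zero] at h4
    exact h4
  -- product-form evaluations
  set E : Finset (Fin N) → ℝ := fun s => ∏ j ∈ s, (z i - z j) with hE
  have hEzero : ∀ s : Finset (Fin N), i ∈ s → E s = 0 := fun s hs =>
    Finset.prod_eq_zero hs (by ring)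
  have hP' : derivative P = ∑ b : Fin N, ∏ j ∈ Finset.univ.erase b, (X - Polynomial.C (z j)) := by
    rw [hPdef, derivative_finset_prod]
    refine Finset.sum_congr rfl fun b _ => ?_
    simp
  have hprodeval : ∀ s : Finset (Fin N),
      (∏ j ∈ s, (X - Polynomial.C (z j))).eval (z i) = E s := by
    intro s; simp [Polynomial.eval_prod, hE]
  have hP'eval : (derivative P).eval (z i) = E (Finset.univ.erase i) := by
    rw [hP', Polynomial.eval_finset_sum]
    rw [Finset.sum_eq_single i]
    · exact hprodeval _
    · intro b _ hbi
      rw [hprodeval]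
      exact hEzero _ (Finset.mem_erase.mpr ⟨Ne.symm hbi, Finset.mem_univ i⟩)
    · simp
  have hEne : E (Finset.univ.erase i) ≠ 0 := by
    rw [hE]
    refine Finset.prod_ne_zero_iff.mpr fun j hj => ?_
    have : j ≠ i := (Finset.mem_erase.mp hj).1
    exact sub_ne_zero.mpr fun h => this (hzinj h.symm)
  have hP''eval : (derivative (derivative P)).eval (z i)
      = 2 * ∑ c ∈ Finset.univ.erase i, E ((Finset.univ.erase i).erase c) := by
    rw [hP', Polynomial.derivative_sum]
    have hterm : ∀ b : Fin N,
        (derivative (∏ j ∈ Finset.univ.erase b, (X - Polynomial.C (z j)))).eval (z i)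
          = ∑ c ∈ (Finset.univ.erase b), E ((Finset.univ.erase b).erase c) := by
      intro b
      rw [derivative_finset_prod, Polynomial.eval_finset_sum]
      refine Finset.sum_congr rfl fun c _ => ?_
      simp [Polynomial.eval_prod, hE]
    rw [Polynomial.eval_finset_sum]
    simp only [hterm]
    rw [← Finset.add_sum_erase _ _ (Finset.mem_univ i)]
    have hb : ∀ b ∈ Finset.univ.erase i,
        (∑ c ∈ Finset.univ.erase b, E ((Finset.univ.erase b).erase c))
          = E ((Finset.univ.erase i).erase b) := by
      intro b hbmem
      have hbi : b ≠ i := (Finset.mem_erase.mp hbmem).1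
      rw [Finset.sum_eq_single i]
      · rw [Finset.erase_right_comm]
      · intro c hc hci
        refine hEzero _ ?_
        refine Finset.mem_erase.mpr ⟨Ne.symm hci, Finset.mem_erase.mpr ⟨Ne.symm hbi, Finset.mem_univ i⟩⟩
      · intro h
        exact absurd (Finset.mem_erase.mpr ⟨Ne.symm hbi, Finset.mem_univ i⟩) h
    rw [Finset.sum_congr rfl hb]
    ring
  have hEdiv : ∀ c ∈ Finset.univ.erase i,
      E ((Finset.univ.erase i).erase c) = E (Finset.univ.erase i) * (1 / (z i - z c)) := by
    intro c hc
    have hne : z i - z c ≠ 0 :=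
      sub_ne_zero.mpr fun h => (Finset.mem_erase.mp hc).1 (hzinj h.symm)
    have h5 := Finset.mul_prod_erase (Finset.univ.erase i) (fun j => z i - z j) hc
    beta_reduce at h5
    rw [hE, mul_one_div, eq_div_iff hne]
    linear_combination h5
  have hsum : ∑ c ∈ Finset.univ.erase i, E ((Finset.univ.erase i).erase c)
      = E (Finset.univ.erase i) * ∑ c ∈ Finset.univ.erase i, 1 / (z i - z c) := by
    rw [Finset.mul_sum]
    exact Finset.sum_congr rfl hEdiv
  rw [hP''eval, hsum, hP'eval] at heval0
  have hfin : E (Finset.univ.erase i) *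
      (2 * z i * (∑ j ∈ Finset.univ.erase i, 1 / (z i - z j)) - (z i - ν)) = 0 := by
    ring_nf
    ring_nf at heval0
    linarith [heval0]
  rcases mul_eq_zero.mp hfin with h | h
  · exact absurd h hEne
  · linarith [h]

/-- For `y_i = √(2 z_i)` with `z` the vector of ordered zeros of the Laguerre
polynomial `L_N^{(ν-1)}` and `c > 0`, `φ(t) = √(t + c²)·y` solves the ODE of type
`B_N` with parameter `ν`, starts at `c·y`, and stays in the interior of `C_N^B`. -/
theorem statement9 (N : ℕ) (hN : 1 ≤ N) (ν : ℝ) (hν : 0 < ν)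
    (z : Fin N → ℝ) (hz : StrictAnti z) (hzpos : ∀ i, 0 < z i)
    (hzero : ∀ i, laguerre N (ν - 1) (z i) = 0)
    (hall : ∀ w : ℝ, laguerre N (ν - 1) w = 0 → ∃ i, w = z i)
    (c : ℝ) (hc : 0 < c) :
    (∀ t ∈ Set.Ici (0:ℝ),
        interiorB (fun i => Real.sqrt (t + c^2) * Real.sqrt (2 * z i))) ∧
    ((fun i => Real.sqrt (0 + c^2) * Real.sqrt (2 * z i))
        = fun i => c * Real.sqrt (2 * z i)) ∧
    solvesB ν (fun t i => Real.sqrt (t + c^2) * Real.sqrt (2 * z i)) := by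
  have hy : ∀ i, 0 < Real.sqrt (2 * z i) := fun i =>
    Real.sqrt_pos.mpr (by linarith [hzpos i])
  have hy2 : ∀ i, Real.sqrt (2 * z i) ^ 2 = 2 * z i := fun i =>
    Real.sq_sqrt (by linarith [hzpos i])
  have hyanti : StrictAnti (fun i => Real.sqrt (2 * z i)) := by
    intro i j hij
    exact Real.sqrt_lt_sqrt (by linarith [hzpos j]) (by linarith [hz hij])
  refine ⟨?_, ?_, ?_⟩
  · intro t ht
    have hs : 0 < Real.sqrt (t + c^2) := Real.sqrt_pos.mpr (by
      have := Set.mem_Ici.mp ht; positivity)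
    exact ⟨fun i j hij => by
      exact mul_lt_mul_of_pos_left (hyanti hij) hs,
      fun i => mul_pos hs (hy i)⟩
  · funext i
    rw [zero_add, Real.sqrt_sq hc.le]
  · intro t ht i
    have ht0 : (0:ℝ) ≤ t := Set.mem_Ici.mp ht
    have htc : 0 < t + c^2 := by positivity
    have hs : 0 < Real.sqrt (t + c^2) := Real.sqrt_pos.mpr htc
    have hs2 : Real.sqrt (t + c^2) ^ 2 = t + c^2 := Real.sq_sqrt htc.le
    set s := Real.sqrt (t + c^2) with hsdef
    set y : Fin N → ℝ := fun i => Real.sqrt (2 * z i) with hydef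
    -- derivative of u ↦ √(u + c²) * y i
    have hd : HasDerivWithinAt (fun u => Real.sqrt (u + c^2) * y i)
        (y i / (2 * s)) (Set.Ici 0) t := by
      have h1 : HasDerivWithinAt (fun u : ℝ => u + c^2) 1 (Set.Ici 0) t :=
        ((hasDerivAt_id t).add_const _).hasDerivWithinAt
      have h2 : HasDerivAt Real.sqrt (1 / (2 * Real.sqrt (t + c^2))) (t + c^2) :=
        Real.hasDerivAt_sqrt htc.ne'
      have h3 := (h2.comp_hasDerivWithinAt t h1)
      have h4 := h3.mul_const (y i)
      convert h4 using 1
      · rfl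
      · rfl
      · rfl
      · simp only [one_div, mul_one, hsdef]
        ring
    -- the value matches the ODE right-hand side
    have key : (∑ j ∈ Finset.univ.erase i,
        (1 / (s * y i - s * y j) + 1 / (s * y i + s * y j))) + ν / (s * y i)
        = y i / (2 * s) := by
      have hterm : ∀ j ∈ Finset.univ.erase i,
          1 / (s * y i - s * y j) + 1 / (s * y i + s * y j)
            = y i / s * (1 / (z i - z j)) := by
        intro j hj
        have hij : j ≠ i := (Finset.mem_erase.mp hj).1
        have hyne : y i ≠ y j := by
          rcases hij.lt_or_gt with h | h
          · exact (hyanti h).ne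
          · exact (hyanti h).ne'
        have hzne : z i - z j ≠ 0 := by
          rcases hij.lt_or_gt with h | h
          · exact (sub_neg.mpr (hz h)).ne
          · exact (sub_pos.mpr (hz h)).ne'
        have hsub : y i - y j ≠ 0 := sub_ne_zero.mpr hyne
        have hadd : (0:ℝ) < y i + y j := by linarith [hy i, hy j]
        have hprod : (y i - y j) * (y i + y j) = 2 * (z i - z j) := by
          have := hy2 i; have := hy2 j; nlinarith
        have h1 : s * y i - s * y j = s * (y i - y j) := by ring
        have h2 : s * y i + s * y j = s * (y i + y j) := by ring
        rw [h1, h2]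
        field_simp
        linear_combination (-(y i)) * hprod
      rw [Finset.sum_congr rfl hterm, ← Finset.mul_sum]
      have hS := electro N hN ν hν z hz hzpos hzero i
      have hzi := hzpos i
      have hyi := hy i
      have hyi2 := hy2 i
      have hSval : (∑ j ∈ Finset.univ.erase i, 1 / (z i - z j)) = (z i - ν) / (2 * z i) := by
        field_simp at hS ⊢
        linarith [hS]
      rw [hSval]
      have hyne : y i ≠ 0 := hyi.ne'
      field_simp
      linear_combination (-ν) * hyi2
    rw [← key] at hd
    exact hd
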